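/- In the setting of an ergodic α-incidence graph and strict coordinate means M_i, for every x ∈ I^p either M_α^{3^p}(x) is a constant vector, or min(x) < min(M_α^{3^p}(x)) ≤ max(M_α^{3^p}(x)) < max(x). -/

import Mathlib

def HasWalk {V : Type*} (E : V → V → Prop) (v w : V) (n : ℕ) : Prop :=
  ∃ f : Fin (n + 1) → V, f 0 = v ∧ f (Fin.last n) = w ∧
    ∀ i : Fin n, E (f i.castSucc) (f i.succ)

def Irreducible' {V : Type*} (E : V → V → Prop) : Prop :=
  ∀ v w : V, ∃ n : ℕ, HasWalk E v w n

def Aperiodic' {V : Type*} (E : V → V → Prop) : Prop :=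
  ¬ ∃ k : ℕ, 1 < k ∧ ∀ (n : ℕ) (v : V), 0 < n → HasWalk E v v n → k ∣ n

def NWalk {V : Type*} (E : V → V → Prop) (v w : V) (n : ℕ) : Prop :=
  ∃ f : ℕ → V, f 0 = v ∧ f n = w ∧ ∀ i < n, E (f i) (f (i + 1))

theorem NWalk.of_hasWalk {V : Type*} {E : V → V → Prop} {v w : V} {n : ℕ}
    (h : HasWalk E v w n) : NWalk E v w n := by
  obtain ⟨f, h0, hl, he⟩ := h
  refine ⟨fun k => f ⟨min k n, by omega⟩, ?_, ?_, ?_⟩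
  · beta_reduce
    have : (⟨min 0 n, by omega⟩ : Fin (n+1)) = 0 := by simp [Fin.ext_iff]
    rw [this, h0]
  · beta_reduce
    have : (⟨min n n, by omega⟩ : Fin (n+1)) = Fin.last n := by simp [Fin.ext_iff]
    rw [this, hl]
  · intro i hi
    beta_reduce
    have h1 : (⟨min i n, by omega⟩ : Fin (n+1)) = (⟨i, hi⟩ : Fin n).castSucc := by
      simp [Fin.ext_iff]; omega
    have h2 : (⟨min (i+1) n, by omega⟩ : Fin (n+1)) = (⟨i, hi⟩ : Fin n).succ := by
      simp [Fin.ext_iff]; omega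
    rw [h1, h2]; exact he ⟨i, hi⟩

theorem NWalk.toHasWalk {V : Type*} {E : V → V → Prop} {v w : V} {n : ℕ}
    (h : NWalk E v w n) : HasWalk E v w n := by
  obtain ⟨f, h0, hl, he⟩ := h
  refine ⟨fun k => f k, ?_, ?_, ?_⟩
  · simpa using h0
  · simpa [Fin.last] using hl
  · intro i
    simpa [Fin.castSucc, Fin.succ] using he i i.isLt

theorem NWalk.refl {V : Type*} {E : V → V → Prop} (v : V) : NWalk E v v 0 :=
  ⟨fun _ => v, rfl, rfl, by omega⟩

theorem NWalk.trans {V : Type*} {E : V → V → Prop} {v w u : V} {n m : ℕ}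
    (h1 : NWalk E v w n) (h2 : NWalk E w u m) : NWalk E v u (n + m) := by
  obtain ⟨f, f0, fl, fe⟩ := h1
  obtain ⟨g, g0, gl, ge⟩ := h2
  refine ⟨fun k => if k ≤ n then f k else g (k - n), ?_, ?_, ?_⟩
  · simp [f0]
  · rcases Nat.eq_zero_or_pos m with hm | hm
    · subst hm; simp [fl, ← g0, gl]
    · have : ¬ (n + m ≤ n) := by omega
      simp [this, gl]
  · intro i hi
    rcases lt_trichotomy i n with h | h | h
    · have h1 : i ≤ n := by omega
      have h2 : i + 1 ≤ n := by omega
      simp only [if_pos h1, if_pos h2]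
      exact fe i h
    · subst h
      have hm : 0 < m := by omega
      have h2 : ¬ (i + 1 ≤ i) := by omega
      simp only [le_refl, if_pos, if_neg h2]
      have : i + 1 - i = 1 := by omega
      rw [this, fl, ← g0]
      exact ge 0 hm
    · have h1 : ¬ (i ≤ n) := by omega
      have h2 : ¬ (i + 1 ≤ n) := by omega
      simp only [if_neg h1, if_neg h2]
      have : i + 1 - n = (i - n) + 1 := by omega
      rw [this]
      exact ge (i - n) (by omega)

theorem NWalk.congr_len {V : Type*} {E : V → V → Prop} {v w : V} {n m : ℕ}
    (h : NWalk E v w n) (hnm : n = m) : NWalk E v w m := hnm ▸ h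

/-- Excision: a long walk contains a short cycle which can be removed. -/
theorem NWalk.excise {p : ℕ} {E : Fin p → Fin p → Prop} {v w : Fin p} {n : ℕ}
    (h : NWalk E v w n) (hn : p ≤ n) :
    ∃ c u, 1 ≤ c ∧ c ≤ p ∧ NWalk E u u c ∧ NWalk E v w (n - c) := by
  obtain ⟨f, f0, fl, fe⟩ := h
  -- pigeonhole on positions 0..p
  have hp : 0 < p := v.pos
  obtain ⟨a, b, hab, hfab⟩ :
      ∃ a b : Fin (p + 1), a ≠ b ∧ f a = f b := by
    have : ¬ Function.Injective (fun k : Fin (p+1) => f k) := by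
      intro hinj
      have := Fintype.card_le_of_injective _ hinj
      simp at this
    simp only [Function.Injective, not_forall] at this
    obtain ⟨a, b, hab, hne⟩ := this
    exact ⟨a, b, hne, hab⟩
  -- wlog a < b
  obtain ⟨i, j, hij, hjp, hfij⟩ :
      ∃ i j : ℕ, i < j ∧ j ≤ p ∧ f i = f j := by
    rcases lt_trichotomy (a : ℕ) (b : ℕ) with h | h | h
    · exact ⟨a, b, h, by omega, hfab⟩
    · exact absurd (Fin.ext h) hab
    · exact ⟨b, a, h, by omega, hfab.symm⟩
  refine ⟨j - i, f i, by omega, by omega, ?_, ?_⟩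
  · refine ⟨fun k => f (i + min k (j - i)), by simp, ?_, ?_⟩
    · beta_reduce
      rw [min_self, show i + (j - i) = j by omega, hfij]
    · intro k hk
      beta_reduce
      rw [show i + min k (j-i) = i + k by omega, show i + min (k+1) (j-i) = i + k + 1 by omega]
      exact fe (i + k) (by omega)
  · refine ⟨fun k => if k ≤ i then f k else f (k + (j - i)), by simp [f0], ?_, ?_⟩
    · beta_reduce
      by_cases hle : n - (j - i) ≤ i
      · have h1 : n - (j - i) = i := by omega
        have h2 : n = j := by omega
        rw [if_pos hle, h1, hfij, ← h2, fl]
      · simp only [if_neg hle]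
        rw [show n - (j - i) + (j - i) = n by omega, fl]
    · intro k hk
      beta_reduce
      rcases lt_trichotomy k i with h | h | h
      · simp only [if_pos (by omega : k ≤ i), if_pos (by omega : k + 1 ≤ i)]
        exact fe k (by omega)
      · subst h
        simp only [le_refl, if_pos, if_neg (by omega : ¬ (k + 1 ≤ k))]
        rw [hfij, show k + 1 + (j - k) = j + 1 by omega]
        exact fe j (by omega)
      · simp only [if_neg (by omega : ¬ (k ≤ i)), if_neg (by omega : ¬ (k + 1 ≤ i))]
        rw [show k + 1 + (j - i) = (k + (j - i)) + 1 by omega]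
        exact fe (k + (j - i)) (by omega)

/-- Any walk can be shortened to length < p. -/
theorem NWalk.short {p : ℕ} {E : Fin p → Fin p → Prop} {v w : Fin p} {n : ℕ}
    (h : NWalk E v w n) : ∃ m < p, NWalk E v w m := by
  induction n using Nat.strong_induction_on generalizing v w with
  | _ n ih =>
    by_cases hn : n < p
    · exact ⟨n, hn, h⟩
    · obtain ⟨c, u, hc1, hcp, _, hw⟩ := h.excise (by omega)
      exact ih (n - c) (by omega) hw

theorem NWalk.mul_cycle {V : Type*} {E : V → V → Prop} {u : V} {c : ℕ}
    (h : NWalk E u u c) : ∀ k, NWalk E u u (k * c) := by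
  intro k
  induction k with
  | zero => exact (NWalk.refl u).congr_len (by ring)
  | succ k ih => exact (ih.trans h).congr_len (by ring)

section Graph

open Classical in
/-- The set of short cycle lengths. -/
noncomputable def cycLens (p : ℕ) (E : Fin p → Fin p → Prop) : Finset ℕ :=
  (Finset.Icc 1 p).filter (fun c => ∃ u, NWalk E u u c)

theorem cycLens_dvd_closed {p : ℕ} {E : Fin p → Fin p → Prop} :
    ∀ n : ℕ, ∀ u : Fin p, NWalk E u u n → (cycLens p E).gcd id ∣ n := by
  intro n
  induction n using Nat.strong_induction_on with
  | _ n ih =>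
    intro u h
    rcases Nat.eq_zero_or_pos n with h0 | h0
    · simp [h0]
    by_cases hn : n ≤ p
    · have hmem : n ∈ cycLens p E := by
        simp only [cycLens, Finset.mem_filter, Finset.mem_Icc]
        exact ⟨⟨h0, hn⟩, u, h⟩
      exact Finset.gcd_dvd hmem
    · obtain ⟨c, u', hc1, hcp, hcyc, hw⟩ := h.excise (by omega)
      have hmem : c ∈ cycLens p E := by
        simp only [cycLens, Finset.mem_filter, Finset.mem_Icc]
        exact ⟨⟨hc1, hcp⟩, u', hcyc⟩
      have h1 : (cycLens p E).gcd id ∣ c := by exact Finset.gcd_dvd hmem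
      have h2 := ih (n - c) (by omega) u hw
      have := Nat.dvd_add h2 h1
      rwa [Nat.sub_add_cancel (by omega)] at this

end Graph

/-- Solving y * c ≡ n (mod g₀) with small y, when gcd(c,g₀) ∣ n. -/
theorem exists_small_solution (c g₀ n : ℕ) (hg₀ : 0 < g₀)
    (hdvd : Nat.gcd c g₀ ∣ n) :
    ∃ y : ℕ, y < g₀ / Nat.gcd c g₀ ∧ (y * c) % g₀ = n % g₀ := by
  set g := Nat.gcd c g₀ with hg
  have hgpos : 0 < g := Nat.gcd_pos_of_pos_right c hg₀
  set dd : ℕ := g₀ / g with hdd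
  have hddpos : 0 < dd := Nat.div_pos (Nat.le_of_dvd hg₀ (Nat.gcd_dvd_right c g₀)) hgpos
  have hg₀eq : g₀ = g * dd := by
    rw [hdd, Nat.mul_div_cancel' (Nat.gcd_dvd_right c g₀)]
  -- Bezout over ℤ
  obtain ⟨n', hn'⟩ := hdvd
  have hbez : (g : ℤ) = c * Nat.gcdA c g₀ + g₀ * Nat.gcdB c g₀ := Nat.gcd_eq_gcd_ab c g₀
  set y₀ : ℤ := Nat.gcdA c g₀ * n' with hy₀
  have hcong0 : (g₀ : ℤ) ∣ (c * y₀ - n) := by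
    have : (n : ℤ) = g * n' := by exact_mod_cast hn'
    rw [this, hy₀, hbez]
    ring_nf
    -- c * (gcdA * n') - (c * gcdA + g₀ * gcdB) * n' = - g₀ * gcdB * n'
    exact ⟨-(Nat.gcdB c g₀ * n'), by ring⟩
  set y : ℤ := y₀ % (dd : ℤ) with hy
  have hy_nonneg : 0 ≤ y := Int.emod_nonneg y₀ (by exact_mod_cast hddpos.ne')
  have hy_lt : y < dd := by
    have := Int.emod_lt_of_pos y₀ (by exact_mod_cast hddpos : (0:ℤ) < dd)
    exact this
  have hdiff : (g₀ : ℤ) ∣ c * y - c * y₀ := by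
    obtain ⟨c', hc'⟩ := Nat.gcd_dvd_left c g₀
    have hcZ : (c : ℤ) = g * c' := by exact_mod_cast hc'
    have hg₀Z : (g₀ : ℤ) = g * dd := by exact_mod_cast hg₀eq
    have hymod : y = y₀ - dd * (y₀ / dd) := by rw [hy, Int.emod_def]
    exact ⟨-(c' * (y₀ / dd)), by rw [hymod, hcZ, hg₀Z]; ring⟩
  have hfinal : (g₀ : ℤ) ∣ c * y - n := by
    have := dvd_add hdiff hcong0
    simpa using this
  refine ⟨y.toNat, by omega, ?_⟩
  have hyt : (y.toNat : ℤ) = y := Int.toNat_of_nonneg hy_nonneg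
  have hmod : (n : ℤ) % (g₀ : ℤ) = (c * y) % (g₀ : ℤ) := Int.modEq_iff_dvd.mpr hfinal
  have hmodZ : ((y.toNat * c : ℕ) : ℤ) % ((g₀ : ℕ) : ℤ) = ((n : ℕ) : ℤ) % ((g₀ : ℕ) : ℤ) := by
    push_cast [hyt]
    rw [mul_comm]
    exact hmod.symm
  rw [← Int.natCast_mod, ← Int.natCast_mod] at hmodZ
  exact_mod_cast hmodZ

theorem rep_lemma (p : ℕ) : ∀ C : Finset ℕ, ∀ a ∈ C, (∀ c ∈ C, 0 < c ∧ c ≤ p) →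
    ∀ n, C.gcd id ∣ n → p * (a - C.gcd id) ≤ n →
    ∃ x : ℕ → ℕ, ∑ c ∈ C, x c * c = n := by
  intro C
  induction C using Finset.strongInduction with
  | _ C ih =>
    intro a ha hC n hdvd hn
    by_cases hsing : ∀ c ∈ C, c = a
    · have hCa : C = {a} := by
        apply Finset.Subset.antisymm
        · intro c hc; simp [hsing c hc]
        · intro c hc; simp at hc; subst hc; exact ha
      have hga : C.gcd id = a := by simp [hCa]
      rw [hga] at hdvd
      obtain ⟨k, hk⟩ := hdvd
      exact ⟨fun _ => k, by simp [hCa, hk]; ring⟩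
    · push_neg at hsing
      obtain ⟨c₀, hc₀, hc₀ne⟩ := hsing
      set C' := C.erase c₀ with hC'
      have ha' : a ∈ C' := Finset.mem_erase.mpr ⟨fun h => hc₀ne h.symm, ha⟩
      have hc₀nm : c₀ ∉ C' := Finset.notMem_erase c₀ C
      have hCC' : C = insert c₀ C' := (Finset.insert_erase hc₀).symm
      set g := C.gcd id with hgdef
      set g₀ := C'.gcd id with hg₀def
      have hgins : g = Nat.gcd c₀ g₀ := by
        rw [hgdef, hCC', Finset.gcd_insert]; rfl
      have hapos : 0 < a := (hC a ha).1
      have hg₀a : g₀ ∣ a := Finset.gcd_dvd ha'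
      have hg₀pos : 0 < g₀ := Nat.pos_of_dvd_of_pos hg₀a hapos
      have hgg₀ : g ∣ g₀ := hgins ▸ Nat.gcd_dvd_right c₀ g₀
      have hgpos : 0 < g := Nat.pos_of_dvd_of_pos (dvd_trans hgg₀ hg₀a) hapos
      have hdvd' : Nat.gcd c₀ g₀ ∣ n := hgins ▸ hdvd
      obtain ⟨y, hy_lt, hy_mod⟩ := exists_small_solution c₀ g₀ n hg₀pos hdvd'
      rw [← hgins] at hy_lt
      -- bound y * c₀
      have hdd : g₀ / g - 1 ≤ g₀ - g := by
        obtain ⟨t, ht⟩ := hgg₀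
        rw [ht, Nat.mul_div_cancel_left _ hgpos]
        rcases t with _ | t'
        · omega
        · have : t' ≤ g * t' := Nat.le_mul_of_pos_left t' hgpos
          have hmul : g * (t' + 1) = g * t' + g := by ring
          omega
      have hyle : y ≤ g₀ - g := by omega
      have hc₀p : c₀ ≤ p := (hC c₀ hc₀).2
      have hyc_le : y * c₀ ≤ p * (g₀ - g) := by
        calc y * c₀ ≤ (g₀ - g) * p := Nat.mul_le_mul hyle hc₀p
        _ = p * (g₀ - g) := by ring
      have hg₀le : g₀ ≤ a := Nat.le_of_dvd hapos hg₀a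
      have hgle : g ≤ g₀ := Nat.le_of_dvd hg₀pos hgg₀
      have hsplit : p * (a - g) = p * (a - g₀) + p * (g₀ - g) := by
        rw [← Nat.mul_add]
        congr 1
        omega
      have hycn : y * c₀ ≤ n := by omega
      have hrest : p * (a - g₀) ≤ n - y * c₀ := by omega
      have hdvd₀ : g₀ ∣ n - y * c₀ :=
        (Nat.modEq_iff_dvd' hycn).mp hy_mod
      obtain ⟨x', hx'⟩ := ih C' (Finset.erase_ssubset hc₀) a ha'
        (fun c hc => hC c (Finset.mem_of_mem_erase hc)) (n - y * c₀) hdvd₀ hrest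
      refine ⟨fun c => if c = c₀ then y else x' c, ?_⟩
      rw [hCC', Finset.sum_insert hc₀nm]
      have hsum : ∑ c ∈ C', (if c = c₀ then y else x' c) * c = ∑ c ∈ C', x' c * c := by
        apply Finset.sum_congr rfl
        intro c hc
        rw [if_neg (Finset.ne_of_mem_erase hc)]
      beta_reduce
      rw [if_pos rfl, hsum, hx']
      omega

theorem NWalk.single {V : Type*} {E : V → V → Prop} {a b : V} (h : E a b) :
    NWalk E a b 1 := by
  refine ⟨fun k => if k = 0 then a else b, by simp, by simp, ?_⟩
  intro i hi
  have : i = 0 := by omega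
  subst this
  simpa using h

theorem chain_walk {p : ℕ} {E : Fin p → Fin p → Prop}
    (hshort : ∀ v w : Fin p, ∃ m, m < p ∧ NWalk E v w m) :
    ∀ C : Finset ℕ, (∀ c ∈ C, ∃ u, NWalk E u u c) → ∀ v : Fin p,
      ∃ e, e ≤ 2 * (p - 1) * C.card ∧ ∀ x : ℕ → ℕ, NWalk E v v (e + ∑ c ∈ C, x c * c) := by
  intro C
  induction C using Finset.induction_on with
  | empty => exact fun _ v => ⟨0, by simp, fun x => by simpa using NWalk.refl v⟩
  | insert c C' hnm ih =>
    intro hcyc v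
    obtain ⟨u, hu⟩ := hcyc c (Finset.mem_insert_self c C')
    obtain ⟨a, hap, ha⟩ := hshort v u
    obtain ⟨b, hbp, hb⟩ := hshort u v
    obtain ⟨e', he'b, he'⟩ := ih (fun c' hc' => hcyc c' (Finset.mem_insert_of_mem hc')) u
    refine ⟨a + b + e', ?_, ?_⟩
    · rw [Finset.card_insert_of_notMem hnm]
      have : 2 * (p - 1) * (C'.card + 1) = 2 * (p-1) * C'.card + 2 * (p-1) := by ring
      omega
    · intro x
      have w1 : NWalk E v u (a + x c * c) := ha.trans (hu.mul_cycle (x c))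
      have w2 : NWalk E v u (a + x c * c + (e' + ∑ c' ∈ C', x c' * c')) := w1.trans (he' x)
      have w3 := w2.trans hb
      apply w3.congr_len
      rw [Finset.sum_insert hnm]
      ring

theorem three_pow_aux : ∀ n : ℕ, (n + 1) * (3 * n + 7) ≤ 3 ^ (n + 2) := by
  intro n
  induction n with
  | zero => norm_num
  | succ m ih =>
    have h1 : (m + 1 + 1) * (3 * (m + 1) + 7) ≤ 3 * ((m + 1) * (3 * m + 7)) := by nlinarith
    calc (m + 1 + 1) * (3 * (m + 1) + 7) ≤ 3 * ((m + 1) * (3 * m + 7)) := h1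
      _ ≤ 3 * 3 ^ (m + 2) := by omega
      _ = 3 ^ (m + 3) := by ring

theorem three_pow_bound : ∀ p : ℕ, (p - 1) * (3 * p + 1) ≤ 3 ^ p
  | 0 => by simp
  | 1 => by norm_num
  | (n+2) => by
    have h1 := three_pow_aux n
    have h2 : n + 2 - 1 = n + 1 := by omega
    rw [h2]
    have h3 : (n + 1) * (3 * (n + 2) + 1) = (n + 1) * (3 * n + 7) := by ring
    omega

def IncidE (p : ℕ) (d : Fin p → ℕ) (α : ∀ i : Fin p, Fin (d i) → Fin p) :
    Fin p → Fin p → Prop :=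
  fun a i : Fin p => ∃ j : Fin (d i), α i j = a

theorem reach_pow {p : ℕ} (hp : 0 < p) (d : Fin p → ℕ) (hd : ∀ i, 0 < d i)
    (α : ∀ i : Fin p, Fin (d i) → Fin p)
    (hirr : Irreducible' (IncidE p d α)) (haper : Aperiodic' (IncidE p d α)) :
    ∀ v w : Fin p, NWalk (IncidE p d α) v w (3 ^ p) := by
  classical
  set E := IncidE p d α with hE
  have hshort : ∀ v w : Fin p, ∃ m, m < p ∧ NWalk E v w m := by
    intro v w
    obtain ⟨n, hn⟩ := hirr v w
    obtain ⟨m, hm, hw⟩ := (NWalk.of_hasWalk hn).short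
    exact ⟨m, hm, hw⟩
  set Cyc := cycLens p E with hCyc
  have hCsub : ∀ c ∈ Cyc, 0 < c ∧ c ≤ p := by
    intro c hc
    simp only [hCyc, cycLens, Finset.mem_filter, Finset.mem_Icc] at hc
    omega
  have hcyc : ∀ c ∈ Cyc, ∃ u, NWalk E u u c := by
    intro c hc
    simp only [hCyc, cycLens, Finset.mem_filter, Finset.mem_Icc] at hc
    exact hc.2
  have hCne : Cyc.Nonempty := by
    set v0 : Fin p := ⟨0, hp⟩
    set a : Fin p := α v0 ⟨0, hd v0⟩ with ha
    have hedge : E a v0 := ⟨⟨0, hd v0⟩, rfl⟩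
    obtain ⟨m, hm, hw⟩ := hshort v0 a
    have hclosed : NWalk E a a (1 + m) := (NWalk.single hedge).trans hw
    refine ⟨1 + m, ?_⟩
    simp only [hCyc, cycLens, Finset.mem_filter, Finset.mem_Icc]
    exact ⟨⟨by omega, by omega⟩, a, hclosed⟩
  set g := Cyc.gcd id with hg
  have hgpos : 0 < g := by
    rcases Nat.eq_zero_or_pos g with h0 | h0
    · exfalso
      obtain ⟨c, hc⟩ := hCne
      have hc0 : (id c : ℕ) = 0 := Finset.gcd_eq_zero_iff.mp h0 c hc
      have := (hCsub c hc).1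
      simp at hc0
      omega
    · exact h0
  have hg1 : g = 1 := by
    by_contra hne
    have hg2 : 1 < g := by omega
    exact haper ⟨g, hg2, fun n v hn hwk => cycLens_dvd_closed n v (NWalk.of_hasWalk hwk)⟩
  obtain ⟨a₀, ha₀⟩ := hCne
  have ha₀p : a₀ ≤ p := (hCsub a₀ ha₀).2
  have hcard : Cyc.card ≤ p := by
    calc Cyc.card ≤ (Finset.Icc 1 p).card := Finset.card_le_card (Finset.filter_subset _ _)
      _ = p := by rw [Nat.card_Icc]; omega
  intro v w
  obtain ⟨e, heb, he⟩ := chain_walk hshort Cyc hcyc v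
  obtain ⟨s, hsp, hs⟩ := hshort v w
  have hebound : e ≤ 2 * (p - 1) * p := by
    have := Nat.mul_le_mul_left (2 * (p - 1)) hcard
    omega
  -- numeric bound
  have hnum : s + e + p * (a₀ - 1) ≤ 3 ^ p := by
    have h3 := three_pow_bound p
    have h4 : p * (a₀ - 1) ≤ p * (p - 1) := Nat.mul_le_mul_left p (by omega)
    have h5 : (p - 1) * (3 * p + 1) = (p-1) + 2 * (p-1) * p + p * (p-1) := by
      obtain ⟨q, rfl⟩ : ∃ q, p = q + 1 := ⟨p - 1, by omega⟩
      simp only [Nat.add_sub_cancel]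
      ring
    omega
  set r := 3 ^ p - s - e with hr
  have hgcd1 : Cyc.gcd id = 1 := by rw [← hg, hg1]
  obtain ⟨x, hx⟩ := rep_lemma p Cyc a₀ ha₀ hCsub r (by rw [hgcd1]; exact one_dvd r)
    (by rw [hgcd1]; omega)
  have hwalk : NWalk E v v (e + ∑ c ∈ Cyc, x c * c) := he x
  rw [hx] at hwalk
  have := hwalk.trans hs
  apply this.congr_len
  omega

theorem key_dichotomy
    (I : Set ℝ) (p : ℕ) (hp : 0 < p)
    (d : Fin p → ℕ) (hd : ∀ i, 0 < d i)
    (α : ∀ i : Fin p, Fin (d i) → Fin p)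
    (M : ∀ i : Fin p, (Fin (d i) → ℝ) → ℝ)
    (hMI : ∀ (i : Fin p) (y : Fin (d i) → ℝ), (∀ j, y j ∈ I) → M i y ∈ I)
    (hmean : ∀ (i : Fin p) (y : Fin (d i) → ℝ), (∀ j, y j ∈ I) →
      (⨅ j, y j) ≤ M i y ∧ M i y ≤ ⨆ j, y j)
    (hstrict : ∀ (i : Fin p) (y : Fin (d i) → ℝ), (∀ j, y j ∈ I) →
      (∃ j k, y j ≠ y k) → (⨅ j, y j) < M i y ∧ M i y < ⨆ j, y j)
    (T : (Fin p → ℝ) → (Fin p → ℝ))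
    (hTdef : ∀ z i, T z i = M i (fun j => z (α i j)))
    (N : ℕ)
    (hwalks : ∀ v w : Fin p, NWalk (IncidE p d α) v w N)
    (x : Fin p → ℝ) (hx : ∀ i, x i ∈ I) :
    (∃ c : ℝ, T^[N] x = fun _ => c) ∨
      ((⨅ i, x i) < (⨅ i, T^[N] x i) ∧
        (⨅ i, T^[N] x i) ≤ (⨆ i, T^[N] x i) ∧
        (⨆ i, T^[N] x i) < ⨆ i, x i) := by
  haveI : Nonempty (Fin p) := ⟨⟨0, hp⟩⟩
  haveI : ∀ i : Fin p, Nonempty (Fin (d i)) := fun i => ⟨⟨0, hd i⟩⟩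
  have hbb : ∀ {k : ℕ} (f : Fin k → ℝ), BddBelow (Set.range f) :=
    fun f => (Set.finite_range f).bddBelow
  have hba : ∀ {k : ℕ} (f : Fin k → ℝ), BddAbove (Set.range f) :=
    fun f => (Set.finite_range f).bddAbove
  set m := ⨅ i, x i with hm
  set Mx := ⨆ i, x i with hMx
  -- membership of iterates
  have hmem : ∀ n i, T^[n] x i ∈ I := by
    intro n
    induction n with
    | zero => simpa using hx
    | succ n ih =>
      intro i
      rw [Function.iterate_succ_apply', hTdef]
      exact hMI i _ (fun j => ih (α i j))
  -- lower bound preserved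
  have hlow : ∀ n i, m ≤ T^[n] x i := by
    intro n
    induction n with
    | zero => intro i; simpa using ciInf_le (hbb x) i
    | succ n ih =>
      intro i
      rw [Function.iterate_succ_apply', hTdef]
      calc m ≤ ⨅ j, T^[n] x (α i j) := le_ciInf (fun j => ih (α i j))
        _ ≤ M i _ := (hmean i _ (fun j => hmem n (α i j))).1
  -- upper bound preserved
  have hhigh : ∀ n i, T^[n] x i ≤ Mx := by
    intro n
    induction n with
    | zero => intro i; simpa using le_ciSup (hba x) i
    | succ n ih =>
      intro i
      rw [Function.iterate_succ_apply', hTdef]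
      calc M i _ ≤ ⨆ j, T^[n] x (α i j) := (hmean i _ (fun j => hmem n (α i j))).2
        _ ≤ Mx := ciSup_le (fun j => ih (α i j))
  -- step lemmas
  have hstepmin : ∀ k i, T^[k+1] x i = m → ∀ j, T^[k] x (α i j) = m := by
    intro k i hki j
    set y : Fin (d i) → ℝ := fun j => T^[k] x (α i j) with hy
    have hyI : ∀ j, y j ∈ I := fun j => hmem k _
    have hylow : ∀ j, m ≤ y j := fun j => hlow k _
    have hMy : M i y = m := by
      rw [← hki, Function.iterate_succ_apply', hTdef]
    by_cases hcon : ∃ j k', y j ≠ y k'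
    · exfalso
      have h1 := (hstrict i y hyI hcon).1
      have h2 : m ≤ ⨅ j, y j := le_ciInf hylow
      rw [hMy] at h1
      linarith
    · push_neg at hcon
      have hconst : ∀ j', y j' = y j := fun j' => hcon j' j
      have h1 := hmean i y hyI
      have hinf : (⨅ j', y j') = y j :=
        le_antisymm (ciInf_le (hbb y) j) (le_ciInf fun j' => (hconst j').ge)
      have hsup : (⨆ j', y j') = y j :=
        le_antisymm (ciSup_le fun j' => (hconst j').le) (le_ciSup (hba y) j)
      have : y j = m := by
        rw [hinf] at h1
        rw [hsup] at h1
        rw [hMy] at h1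
        linarith
      exact this
  have hstepmax : ∀ k i, T^[k+1] x i = Mx → ∀ j, T^[k] x (α i j) = Mx := by
    intro k i hki j
    set y : Fin (d i) → ℝ := fun j => T^[k] x (α i j) with hy
    have hyI : ∀ j, y j ∈ I := fun j => hmem k _
    have hyhigh : ∀ j, y j ≤ Mx := fun j => hhigh k _
    have hMy : M i y = Mx := by
      rw [← hki, Function.iterate_succ_apply', hTdef]
    by_cases hcon : ∃ j k', y j ≠ y k'
    · exfalso
      have h1 := (hstrict i y hyI hcon).2
      have h2 : (⨆ j, y j) ≤ Mx := ciSup_le hyhigh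
      rw [hMy] at h1
      linarith
    · push_neg at hcon
      have hconst : ∀ j', y j' = y j := fun j' => hcon j' j
      have h1 := hmean i y hyI
      have hinf : (⨅ j', y j') = y j :=
        le_antisymm (ciInf_le (hbb y) j) (le_ciInf fun j' => (hconst j').ge)
      have hsup : (⨆ j', y j') = y j :=
        le_antisymm (ciSup_le fun j' => (hconst j').le) (le_ciSup (hba y) j)
      have : y j = Mx := by
        rw [hinf] at h1
        rw [hsup] at h1
        rw [hMy] at h1
        linarith
      exact this
  -- propagation along walks
  have hminkey : (∃ i₀, T^[N] x i₀ = m) → ∀ v, x v = m := by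
    rintro ⟨i₀, hi₀⟩ v
    obtain ⟨f, f0, fl, fe⟩ := hwalks v i₀
    have hind : ∀ s, s ≤ N → T^[N - s] x (f (N - s)) = m := by
      intro s
      induction s with
      | zero => intro _; simpa [fl] using hi₀
      | succ s ih =>
        intro hs
        have hks' : T^[(N - (s+1)) + 1] x (f ((N - (s+1)) + 1)) = m := by
          have hNs : N - s = (N - (s+1)) + 1 := by omega
          rw [← hNs]
          exact ih (by omega)
        obtain ⟨j, hj⟩ := fe (N - (s+1)) (by omega)
        have h3 := hstepmin (N - (s+1)) (f ((N - (s+1)) + 1)) hks' j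
        rw [hj] at h3
        exact h3
    have := hind N (le_refl N)
    rw [Nat.sub_self] at this
    rw [f0] at this
    simpa using this
  have hmaxkey : (∃ i₁, T^[N] x i₁ = Mx) → ∀ v, x v = Mx := by
    rintro ⟨i₁, hi₁⟩ v
    obtain ⟨f, f0, fl, fe⟩ := hwalks v i₁
    have hind : ∀ s, s ≤ N → T^[N - s] x (f (N - s)) = Mx := by
      intro s
      induction s with
      | zero => intro _; simpa [fl] using hi₁
      | succ s ih =>
        intro hs
        have hks' : T^[(N - (s+1)) + 1] x (f ((N - (s+1)) + 1)) = Mx := by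
          have hNs : N - s = (N - (s+1)) + 1 := by omega
          rw [← hNs]
          exact ih (by omega)
        obtain ⟨j, hj⟩ := fe (N - (s+1)) (by omega)
        have h3 := hstepmax (N - (s+1)) (f ((N - (s+1)) + 1)) hks' j
        rw [hj] at h3
        exact h3
    have := hind N (le_refl N)
    rw [Nat.sub_self] at this
    rw [f0] at this
    simpa using this
  -- fixed point for constant vectors
  have hTfix : ∀ z : Fin p → ℝ, (∀ i, z i ∈ I) → (∀ i j, z i = z j) → T z = z := by
    intro z hzI hzc
    funext i
    rw [hTdef]
    have hyI : ∀ j, z (α i j) ∈ I := fun j => hzI _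
    have h1 := hmean i (fun j => z (α i j)) hyI
    beta_reduce at h1
    have hc : ∀ j, z (α i j) = z i := fun j => hzc _ _
    obtain ⟨j0⟩ : Nonempty (Fin (d i)) := ⟨⟨0, hd i⟩⟩
    have h2 : (⨅ j, z (α i j)) ≤ z i := by
      have hh := ciInf_le (hbb (fun j => z (α i j))) j0
      beta_reduce at hh
      rw [hc j0] at hh
      exact hh
    have h3 : z i ≤ ⨆ j, z (α i j) := by
      have hh := le_ciSup (hba (fun j => z (α i j))) j0
      beta_reduce at hh
      rw [hc j0] at hh
      exact hh
    have h4 : z i ≤ ⨅ j, z (α i j) := le_ciInf fun j => (hc j).ge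
    have h5 : (⨆ j, z (α i j)) ≤ z i := ciSup_le fun j => (hc j).le
    linarith [h1.1, h1.2, h2, h3, h4, h5]
  -- assemble
  by_cases hconst : ∃ c : ℝ, T^[N] x = fun _ => c
  · exact Or.inl hconst
  · right
    obtain ⟨i₀, hi₀min⟩ := Finite.exists_min (T^[N] x)
    obtain ⟨i₁, hi₁max⟩ := Finite.exists_max (T^[N] x)
    have hinfN : (⨅ i, T^[N] x i) = T^[N] x i₀ :=
      le_antisymm (ciInf_le (hbb _) i₀) (le_ciInf hi₀min)
    have hsupN : (⨆ i, T^[N] x i) = T^[N] x i₁ :=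
      le_antisymm (ciSup_le hi₁max) (le_ciSup (hba _) i₁)
    have hxconst_contra : ∀ c : ℝ, (∀ v, x v = c) → False := by
      intro c hc
      have hxc : ∀ i j, x i = x j := fun i j => by rw [hc i, hc j]
      have hfix := hTfix x hx hxc
      exact hconst ⟨c, by rw [Function.iterate_fixed hfix N]; funext v; exact hc v⟩
    refine ⟨?_, ?_, ?_⟩
    · rw [hinfN]
      rcases lt_or_eq_of_le (hlow N i₀) with h | h
      · exact h
      · exact absurd (hminkey ⟨i₀, h.symm⟩) (fun hh => hxconst_contra m hh)
    · exact (ciInf_le (hbb _) i₀).trans (le_ciSup (hba _) i₀)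
    · rw [hsupN]
      rcases lt_or_eq_of_le (hhigh N i₁) with h | h
      · exact h
      · exact absurd (hmaxkey ⟨i₁, h⟩) (fun hh => hxconst_contra Mx hh)

theorem ergodic_incidence_graph_dichotomy
    (I : Set ℝ) (hI : I.OrdConnected) (p : ℕ) (hp : 0 < p)
    (d : Fin p → ℕ) (hd : ∀ i, 0 < d i)
    (α : ∀ i : Fin p, Fin (d i) → Fin p)
    (hirr : Irreducible' (fun a i : Fin p => ∃ j : Fin (d i), α i j = a))
    (haper : Aperiodic' (fun a i : Fin p => ∃ j : Fin (d i), α i j = a))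
    (M : ∀ i : Fin p, (Fin (d i) → ℝ) → ℝ)
    (hMI : ∀ (i : Fin p) (y : Fin (d i) → ℝ), (∀ j, y j ∈ I) → M i y ∈ I)
    (hmean : ∀ (i : Fin p) (y : Fin (d i) → ℝ), (∀ j, y j ∈ I) →
      (⨅ j, y j) ≤ M i y ∧ M i y ≤ ⨆ j, y j)
    (hstrict : ∀ (i : Fin p) (y : Fin (d i) → ℝ), (∀ j, y j ∈ I) →
      (∃ j k, y j ≠ y k) → (⨅ j, y j) < M i y ∧ M i y < ⨆ j, y j) :
    ∀ x : Fin p → ℝ, (∀ i, x i ∈ I) →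
      (∃ c : ℝ, (fun z : Fin p → ℝ => fun i => M i (fun j => z (α i j)))^[3 ^ p] x
          = fun _ => c) ∨
      ((⨅ i, x i) <
          (⨅ i, (fun z : Fin p → ℝ => fun i => M i (fun j => z (α i j)))^[3 ^ p] x i) ∧
        (⨅ i, (fun z : Fin p → ℝ => fun i => M i (fun j => z (α i j)))^[3 ^ p] x i) ≤
          (⨆ i, (fun z : Fin p → ℝ => fun i => M i (fun j => z (α i j)))^[3 ^ p] x i) ∧
        (⨆ i, (fun z : Fin p → ℝ => fun i => M i (fun j => z (α i j)))^[3 ^ p] x i) <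
          ⨆ i, x i) := by
  intro x hx
  exact key_dichotomy I p hp d hd α M hMI hmean hstrict
    (fun z : Fin p → ℝ => fun i => M i (fun j => z (α i j)))
    (fun z i => rfl) (3 ^ p) (reach_pow hp d hd α hirr haper) x hx
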